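/- arXiv:1809.07423 — 2 statements merged into one kernel-verified Lean document; each statement's English description precedes it below -/
import Mathlib

section
/- Let 𝔽_q be a finite field with q elements and Q ∈ GL_m(𝔽_q) a matrix that is diagonalizable over the algebraic closure 𝔽̄_q, with distinct eigenvalues λ_1, …, λ_s ∈ 𝔽̄_q^×. Let ℓ ≥ 1, and suppose that for all i ≠ j the element λ_i/λ_j has multiplicative order exactly ℓ in 𝔽̄_q^×. Then every point v ∈ ℙ^{m−1}(𝔽_q) with τ_Q(v) ≠ v lies in an ℓ-cycle of τ_Q: the least positive integer n with τ_Q^n(v) = v equals ℓ. -/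
open Matrix in


lemma aux_mulVec_ne {F : Type*} [Field F] {m : ℕ} (Q : Matrix.GeneralLinearGroup (Fin m) F)
    {x : Fin m → F} (hx : x ≠ 0) : (Q : Matrix (Fin m) (Fin m) F) *ᵥ x ≠ 0 := by
  intro h
  apply hx
  have hQ : ((Q⁻¹ : Matrix.GeneralLinearGroup (Fin m) F) : Matrix (Fin m) (Fin m) F) *
      (Q : Matrix (Fin m) (Fin m) F) = 1 := Units.inv_mul Q
  calc x = 1 *ᵥ x := (Matrix.one_mulVec x).symm
    _ = ((Q⁻¹ : Matrix.GeneralLinearGroup (Fin m) F) : Matrix (Fin m) (Fin m) F) *ᵥ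
        ((Q : Matrix (Fin m) (Fin m) F) *ᵥ x) := by
          rw [Matrix.mulVec_mulVec, hQ]
    _ = 0 := by rw [h, Matrix.mulVec_zero]

/-- The permutation `τ_Q` of `ℙ^{m-1}(F) = ℙ F (Fin m → F)` induced by `Q ∈ GL_m(F)`,
sending the class `[v]` to `[Q v]`. -/
noncomputable def tauQ {F : Type*} [Field F] {m : ℕ}
    (Q : Matrix.GeneralLinearGroup (Fin m) F) :
    Projectivization F (Fin m → F) → Projectivization F (Fin m → F) :=
  Projectivization.map (Matrix.mulVecLin (Q : Matrix (Fin m) (Fin m) F))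
    (by
      intro x y hxy
      have h := congrArg
        (Matrix.mulVec ((Q⁻¹ : Matrix.GeneralLinearGroup (Fin m) F) :
          Matrix (Fin m) (Fin m) F)) hxy
      have hQ : ((Q : Matrix (Fin m) (Fin m) F))⁻¹ * (Q : Matrix (Fin m) (Fin m) F) = 1 :=
        Matrix.nonsing_inv_mul _ ((Matrix.isUnit_iff_isUnit_det _).mp Q.isUnit)
      simpa [Matrix.mulVecLin_apply, Matrix.mulVec_mulVec, hQ] using h)



open Matrix in
lemma tauQ_mk {F : Type*} [Field F] {m : ℕ} (Q : Matrix.GeneralLinearGroup (Fin m) F)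
    (x : Fin m → F) (hx : x ≠ 0) :
    tauQ Q (Projectivization.mk F x hx) =
      Projectivization.mk F ((Q : Matrix (Fin m) (Fin m) F) *ᵥ x) (aux_mulVec_ne Q hx) := by
  unfold tauQ
  exact Projectivization.map_mk _ _ _ _

open Matrix in
lemma tauQ_iter {F : Type*} [Field F] {m : ℕ} (Q : Matrix.GeneralLinearGroup (Fin m) F)
    (x : Fin m → F) (hx : x ≠ 0) (n : ℕ) :
    (tauQ Q)^[n] (Projectivization.mk F x hx) =
      Projectivization.mk F (((Q ^ n : Matrix.GeneralLinearGroup (Fin m) F) :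
        Matrix (Fin m) (Fin m) F) *ᵥ x) (aux_mulVec_ne (Q ^ n) hx) := by
  induction n with
  | zero =>
      simp only [Function.iterate_zero, id_eq, pow_zero]
      congr 1
      · simp [Matrix.one_mulVec]
  | succ n ih =>
      rw [Function.iterate_succ_apply', ih, tauQ_mk]
      congr 1
      rw [Matrix.mulVec_mulVec]
      congr 1
      push_cast [pow_succ']
      ring


open Matrix in
lemma aux_main {F : Type*} [Field F] {m : ℕ} {K : Type*} [Field K] (φ : F →+* K)
    (Q : Matrix.GeneralLinearGroup (Fin m) F)
    (P : (Matrix (Fin m) (Fin m) K)ˣ)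
    (dvec : Fin m → K)
    (hdiag : (Q : Matrix (Fin m) (Fin m) F).map φ =
      (P : Matrix (Fin m) (Fin m) K) * Matrix.diagonal dvec *
        ((P⁻¹ : (Matrix (Fin m) (Fin m) K)ˣ) : Matrix (Fin m) (Fin m) K))
    {s : ℕ} (lam : Fin s → Kˣ)
    (hrange : Set.range (fun i => (lam i : K)) = Set.range dvec)
    (ℓ : ℕ) (hℓ : 1 ≤ ℓ)
    (hord : ∀ i j : Fin s, i ≠ j → orderOf (lam i / lam j) = ℓ)
    (v : Projectivization F (Fin m → F)) (hv : tauQ Q v ≠ v) :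
    IsLeast {n : ℕ | 0 < n ∧ (tauQ Q)^[n] v = v} ℓ := by
  classical
  have hφinj : Function.Injective φ := φ.injective
  set A : Matrix (Fin m) (Fin m) F := (Q : Matrix (Fin m) (Fin m) F) with hAdef
  have hx : v.rep ≠ 0 := v.rep_nonzero
  have hm : Nonempty (Fin m) := by
    by_contra h
    exact hx (funext fun i => absurd ⟨i⟩ h)
  obtain ⟨i0⟩ := hm
  have hd : ∀ i, ∃ a, (lam a : K) = dvec i := fun i => by
    have : dvec i ∈ Set.range dvec := ⟨i, rfl⟩
    rw [← hrange] at this; exact this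
  have hdne : ∀ i, dvec i ≠ 0 := fun i => by
    obtain ⟨a, ha⟩ := hd i
    rw [← ha]; exact (lam a).ne_zero
  -- characterization of iterate fixed points
  have hchar : ∀ n : ℕ, ((tauQ Q)^[n] v = v ↔ ∃ e : Fˣ, (A ^ n) *ᵥ v.rep = (e : F) • v.rep) := by
    intro n
    conv_lhs => rw [← v.mk_rep, tauQ_iter Q v.rep hx n]
    rw [Projectivization.mk_eq_mk_iff]
    constructor
    · rintro ⟨a, ha⟩
      rw [Units.val_pow_eq_pow_val] at ha
      exact ⟨a, by rw [← ha, Units.smul_def]⟩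
    · rintro ⟨e, he⟩
      refine ⟨e, ?_⟩
      rw [Units.smul_def, Units.val_pow_eq_pow_val]
      exact he.symm
  -- conjugation identity for powers
  have hconj : ∀ n : ℕ, (A.map φ) ^ n =
      (P : Matrix (Fin m) (Fin m) K) * Matrix.diagonal dvec ^ n *
        ((P⁻¹ : (Matrix (Fin m) (Fin m) K)ˣ) : Matrix (Fin m) (Fin m) K) := by
    intro n
    rw [hdiag]
    exact Units.conj_pow P (Matrix.diagonal dvec) n
  have hmappow : ∀ n : ℕ, (A ^ n).map φ = (A.map φ) ^ n := fun n => by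
    have h1 : (A ^ n).map φ = φ.mapMatrix (A ^ n) := rfl
    rw [h1, map_pow]; rfl
  -- ℓ-th powers of all diagonal entries agree
  have hpowall : ∀ i, dvec i ^ ℓ = dvec i0 ^ ℓ := by
    intro i
    obtain ⟨a, ha⟩ := hd i
    obtain ⟨b, hb⟩ := hd i0
    by_cases hab : a = b
    · rw [← ha, ← hb, hab]
    · have h1 : (lam a / lam b) ^ ℓ = 1 := by
        rw [← hord a b hab]; exact pow_orderOf_eq_one _
      have h2 : ((lam a : K) / (lam b : K)) ^ ℓ = 1 := by
        have := congrArg (Units.val) h1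
        push_cast at this
        exact this
      have h3 : (lam a : K) ^ ℓ = (lam b : K) ^ ℓ := by
        rw [div_pow, div_eq_one_iff_eq (pow_ne_zero _ (lam b).ne_zero)] at h2
        exact h2
      rw [← ha, ← hb, h3]
  -- D^ℓ is scalar
  have hDl : Matrix.diagonal dvec ^ ℓ = (dvec i0 ^ ℓ) • (1 : Matrix (Fin m) (Fin m) K) := by
    rw [Matrix.diagonal_pow]
    ext i j
    by_cases hij : i = j
    · subst hij
      simp [Matrix.diagonal_apply_eq, hpowall i, Pi.pow_apply]
    · simp [Matrix.diagonal_apply_ne _ hij, Matrix.one_apply_ne hij]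
  -- (A^ℓ).map φ is scalar
  have hAl : (A ^ ℓ).map φ = (dvec i0 ^ ℓ) • (1 : Matrix (Fin m) (Fin m) K) := by
    rw [hmappow, hconj, hDl]
    rw [Matrix.mul_smul, Matrix.smul_mul, Matrix.mul_one, Units.mul_inv]
  -- A^ℓ is scalar over F
  set e : F := (A ^ ℓ) i0 i0 with hedef
  have hφe : φ e = dvec i0 ^ ℓ := by
    have := congrFun (congrFun hAl i0) i0
    simpa [Matrix.map_apply, Matrix.one_apply_eq] using this
  have hene : e ≠ 0 := by
    intro h
    rw [h, map_zero] at hφe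
    exact pow_ne_zero _ (hdne i0) hφe.symm
  have hAle : A ^ ℓ = e • (1 : Matrix (Fin m) (Fin m) F) := by
    ext i j
    apply hφinj
    have h1 := congrFun (congrFun hAl i) j
    by_cases hij : i = j
    · subst hij
      simpa [Matrix.map_apply, Matrix.one_apply_eq, hφe] using h1
    · simp only [Matrix.map_apply, Matrix.smul_apply, Matrix.one_apply_ne hij, smul_zero] at h1 ⊢
      rw [h1, map_zero]
  have hmem : ℓ ∈ {n : ℕ | 0 < n ∧ (tauQ Q)^[n] v = v} := by
    refine ⟨hℓ, (hchar ℓ).2 ⟨Units.mk0 e hene, ?_⟩⟩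
    rw [hAle, Matrix.smul_mulVec, Matrix.one_mulVec]
    rfl
  refine ⟨hmem, ?_⟩
  -- lower bound
  rintro n ⟨hn, hfix⟩
  obtain ⟨c, hc⟩ := (hchar n).1 hfix
  -- move to K
  set xK : Fin m → K := φ ∘ v.rep with hxKdef
  have hxK : xK ≠ 0 := by
    intro h
    apply hx
    funext i
    apply hφinj
    have := congrFun h i
    simpa [hxKdef] using this
  have hEK : (A.map φ) ^ n *ᵥ xK = φ c • xK := by
    rw [← hmappow]
    funext i
    rw [← RingHom.map_mulVec, hc]
    simp [hxKdef, Pi.smul_apply, smul_eq_mul, _root_.map_mul]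
  set y : Fin m → K := ((P⁻¹ : (Matrix (Fin m) (Fin m) K)ˣ) : Matrix (Fin m) (Fin m) K) *ᵥ xK
    with hydef
  have hPy : (P : Matrix (Fin m) (Fin m) K) *ᵥ y = xK := by
    rw [hydef, Matrix.mulVec_mulVec, Units.mul_inv, Matrix.one_mulVec]
  have hyne : y ≠ 0 := by
    intro h
    apply hxK
    rw [← hPy, h, Matrix.mulVec_zero]
  have hDn : Matrix.diagonal dvec ^ n *ᵥ y = φ c • y := by
    have h1 : ((P⁻¹ : (Matrix (Fin m) (Fin m) K)ˣ) : Matrix (Fin m) (Fin m) K) *ᵥ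
        ((A.map φ) ^ n *ᵥ xK) = Matrix.diagonal dvec ^ n *ᵥ y := by
      rw [hconj, Matrix.mulVec_mulVec, ← mul_assoc, ← mul_assoc, Units.inv_mul, one_mul,
        ← Matrix.mulVec_mulVec]
    rw [← h1, hEK, Matrix.mulVec_smul]
  have hcomp : ∀ i, y i ≠ 0 → dvec i ^ n = φ c := by
    intro i hyi
    have := congrFun hDn i
    rw [Matrix.diagonal_pow] at this
    simp only [Matrix.mulVec_diagonal, Pi.smul_apply, smul_eq_mul, Pi.pow_apply] at this
    exact mul_right_cancel₀ hyi this
  by_cases hcase : ∃ i j, y i ≠ 0 ∧ y j ≠ 0 ∧ dvec i ≠ dvec j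
  · obtain ⟨i, j, hyi, hyj, hij⟩ := hcase
    obtain ⟨a, ha⟩ := hd i
    obtain ⟨b, hb⟩ := hd j
    have hab : a ≠ b := by
      intro h; apply hij; rw [← ha, ← hb, h]
    have h1 : (lam a / lam b) ^ n = 1 := by
      apply Units.ext
      push_cast
      rw [div_pow, ha, hb, hcomp i hyi, hcomp j hyj,
        div_self (by rw [← hcomp j hyj]; exact pow_ne_zero _ (hdne j))]
    have h2 : ℓ ∣ n := by
      rw [← hord a b hab]
      exact orderOf_dvd_of_pow_eq_one h1
    exact Nat.le_of_dvd hn h2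
  · exfalso
    push_neg at hcase
    obtain ⟨i1, hi1⟩ : ∃ i, y i ≠ 0 := by
      by_contra h
      push_neg at h
      exact hyne (funext h)
    have hDy : Matrix.diagonal dvec *ᵥ y = dvec i1 • y := by
      funext i
      rw [Matrix.mulVec_diagonal]
      by_cases hyi : y i = 0
      · simp [hyi]
      · rw [hcase i i1 hyi hi1]
        rfl
    have hAx : (A.map φ) *ᵥ xK = dvec i1 • xK := by
      rw [hdiag, ← Matrix.mulVec_mulVec, ← Matrix.mulVec_mulVec, ← hydef, hDy,
        Matrix.mulVec_smul, hPy]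
    obtain ⟨k, hk⟩ : ∃ k, v.rep k ≠ 0 := by
      by_contra h
      push_neg at h
      exact hx (funext h)
    set e' : F := (A *ᵥ v.rep) k / v.rep k with he'def
    have hφxk : φ (v.rep k) ≠ 0 := fun h => hk (hφinj (by rw [h, map_zero]))
    have hφe' : φ e' = dvec i1 := by
      have h1 := congrFun hAx k
      rw [← RingHom.map_mulVec] at h1
      simp only [Pi.smul_apply, smul_eq_mul] at h1
      rw [he'def, map_div₀, h1]
      field_simp [hxKdef]
      rfl
    have hAe' : A *ᵥ v.rep = e' • v.rep := by
      funext i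
      apply hφinj
      have h1 := congrFun hAx i
      rw [← RingHom.map_mulVec] at h1
      simp only [Pi.smul_apply, smul_eq_mul] at h1
      rw [h1, ← hφe', Pi.smul_apply, smul_eq_mul, _root_.map_mul]
      rfl
    have he'ne : e' ≠ 0 := by
      intro h
      apply aux_mulVec_ne Q hx
      rw [← hAdef, hAe', h, zero_smul]
    apply hv
    have := (hchar 1).2 ⟨Units.mk0 e' he'ne, by rw [pow_one]; exact hAe'⟩
    rwa [Function.iterate_one] at this

/-- Let `𝔽_q` be a finite field and `Q ∈ GL_m(𝔽_q)` diagonalizable over the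
algebraic closure `K = 𝔽̄_q`: `Q = P D P⁻¹` with `D = diagonal dvec`, and with distinct
(nonzero) eigenvalues `λ_1, …, λ_s ∈ K^×` (so the set of values of `dvec` is
`{λ_1, …, λ_s}`). Let `ℓ ≥ 1` and suppose that for all `i ≠ j` the element `λ_i/λ_j` has
multiplicative order exactly `ℓ` in `K^×`. Then every point `v ∈ ℙ^{m−1}(𝔽_q)` with
`τ_Q(v) ≠ v` lies in an `ℓ`-cycle of `τ_Q`: the least positive integer `n` with
`τ_Q^n(v) = v` equals `ℓ`. -/
theorem tauQ_nonfixed_period_eq_of_eigenvalue_ratios_order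
    {F : Type*} [Field F] [Fintype F] {m : ℕ}
    (Q : Matrix.GeneralLinearGroup (Fin m) F)
    (P : (Matrix (Fin m) (Fin m) (AlgebraicClosure F))ˣ)
    (dvec : Fin m → AlgebraicClosure F)
    (hdiag : (Q : Matrix (Fin m) (Fin m) F).map (algebraMap F (AlgebraicClosure F)) =
      (P : Matrix (Fin m) (Fin m) (AlgebraicClosure F)) * Matrix.diagonal dvec *
        ((P⁻¹ : (Matrix (Fin m) (Fin m) (AlgebraicClosure F))ˣ) :
          Matrix (Fin m) (Fin m) (AlgebraicClosure F)))
    {s : ℕ} (lam : Fin s → (AlgebraicClosure F)ˣ)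
    (hlam : Function.Injective lam)
    (hrange : Set.range (fun i => (lam i : AlgebraicClosure F)) = Set.range dvec)
    (ℓ : ℕ) (hℓ : 1 ≤ ℓ)
    (hord : ∀ i j : Fin s, i ≠ j → orderOf (lam i / lam j) = ℓ)
    (v : Projectivization F (Fin m → F)) (hv : tauQ Q v ≠ v) :
    IsLeast {n : ℕ | 0 < n ∧ (tauQ Q)^[n] v = v} ℓ := by
  exact aux_main (algebraMap F (AlgebraicClosure F)) Q P dvec hdiag lam hrange ℓ hℓ hord v hv
end

section
/- Let 𝔽_q be a finite field with q elements, K = 𝔽̄_q an algebraic closure, and Q ∈ GL_m(𝔽_q) a matrix that is diagonalizable over K, with distinct eigenvalues λ_1, …, λ_s ∈ K^×. Let ℓ ≥ 1, and suppose that every point v ∈ ℙ^{m−1}(K) with τ_Q(v) ≠ v satisfies that the least positive integer n with τ_Q^n(v) = v equals ℓ. Then for all i ≠ j, the element λ_i/λ_j has multiplicative order exactly ℓ in K^×. -/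
section Aux

variable {F : Type*} [Field F] {m : ℕ}

lemma tauQ_mk_s16 (Q : Matrix.GeneralLinearGroup (Fin m) F) (v : Fin m → F) (hv : v ≠ 0)
    (hv' : (Q : Matrix (Fin m) (Fin m) F).mulVec v ≠ 0) :
    tauQ Q (Projectivization.mk F v hv) =
      Projectivization.mk F ((Q : Matrix (Fin m) (Fin m) F).mulVec v) hv' := by
  rfl

lemma mulVec_unit_ne_zero (A : (Matrix (Fin m) (Fin m) F)ˣ) (v : Fin m → F) (hv : v ≠ 0) :
    (A : Matrix (Fin m) (Fin m) F).mulVec v ≠ 0 := by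
  intro h
  apply hv
  have h2 : ((A⁻¹ : (Matrix (Fin m) (Fin m) F)ˣ) : Matrix (Fin m) (Fin m) F).mulVec
      ((A : Matrix (Fin m) (Fin m) F).mulVec v) = v := by
    rw [Matrix.mulVec_mulVec, ← Units.val_mul, inv_mul_cancel, Units.val_one,
      Matrix.one_mulVec]
  rw [h, Matrix.mulVec_zero] at h2
  exact h2.symm

lemma tauQ_iter_mk (Q : Matrix.GeneralLinearGroup (Fin m) F) (v : Fin m → F) (hv : v ≠ 0)
    (n : ℕ) :
    (tauQ Q)^[n] (Projectivization.mk F v hv) =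
      Projectivization.mk F (((Q ^ n : Matrix.GeneralLinearGroup (Fin m) F) :
        Matrix (Fin m) (Fin m) F).mulVec v)
        (mulVec_unit_ne_zero (Q ^ n) v hv) := by
  induction n with
  | zero => simp [Matrix.one_mulVec]
  | succ n ih =>
      rw [Function.iterate_succ_apply', ih]
      have h1 : (Q : Matrix (Fin m) (Fin m) F).mulVec
          (((Q ^ n : Matrix.GeneralLinearGroup (Fin m) F) :
            Matrix (Fin m) (Fin m) F).mulVec v) =
          ((Q ^ (n + 1) : Matrix.GeneralLinearGroup (Fin m) F) :
            Matrix (Fin m) (Fin m) F).mulVec v := by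
        rw [Matrix.mulVec_mulVec, ← Units.val_mul, ← pow_succ']
      exact (tauQ_mk_s16 Q _ (mulVec_unit_ne_zero (Q ^ n) v hv)
        (h1 ▸ mulVec_unit_ne_zero (Q ^ (n + 1)) v hv)).trans (by simp only [h1])

end Aux

/-- Let `𝔽_q` be a finite field, `K = 𝔽̄_q` an algebraic closure, and
`Q ∈ GL_m(𝔽_q)` diagonalizable over `K`: `Q = P D P⁻¹` with `D = diagonal dvec`, with
distinct (nonzero) eigenvalues `λ_1, …, λ_s ∈ K^×` (the set of values of `dvec` is
`{λ_1, …, λ_s}`). Let `ℓ ≥ 1`, and suppose that every point `v ∈ ℙ^{m−1}(K)` with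
`τ_Q(v) ≠ v` satisfies that the least positive integer `n` with `τ_Q^n(v) = v` equals `ℓ`
(where `Q` acts on `K^m` via `𝔽_q ⊆ K`). Then for all `i ≠ j`, the element `λ_i/λ_j` has
multiplicative order exactly `ℓ` in `K^×`. -/
theorem eigenvalue_ratios_order_of_tauQ_nonfixed_period
    {F : Type*} [Field F] [Fintype F] {m : ℕ}
    (Q : Matrix.GeneralLinearGroup (Fin m) F)
    (P : (Matrix (Fin m) (Fin m) (AlgebraicClosure F))ˣ)
    (dvec : Fin m → AlgebraicClosure F)
    (hdiag : (Q : Matrix (Fin m) (Fin m) F).map (algebraMap F (AlgebraicClosure F)) =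
      (P : Matrix (Fin m) (Fin m) (AlgebraicClosure F)) * Matrix.diagonal dvec *
        ((P⁻¹ : (Matrix (Fin m) (Fin m) (AlgebraicClosure F))ˣ) :
          Matrix (Fin m) (Fin m) (AlgebraicClosure F)))
    {s : ℕ} (lam : Fin s → (AlgebraicClosure F)ˣ)
    (hlam : Function.Injective lam)
    (hrange : Set.range (fun i => (lam i : AlgebraicClosure F)) = Set.range dvec)
    (ℓ : ℕ) (hℓ : 1 ≤ ℓ)
    (hper : ∀ v : Projectivization (AlgebraicClosure F) (Fin m → AlgebraicClosure F),
      tauQ (Matrix.GeneralLinearGroup.map (algebraMap F (AlgebraicClosure F)) Q) v ≠ v →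
      IsLeast {n : ℕ | 0 < n ∧
        (tauQ (Matrix.GeneralLinearGroup.map (algebraMap F (AlgebraicClosure F)) Q))^[n] v = v}
        ℓ) :
    ∀ i j : Fin s, i ≠ j → orderOf (lam i / lam j) = ℓ := by
  intro i j hij
  let K := AlgebraicClosure F
  set R := Matrix.GeneralLinearGroup.map (algebraMap F (AlgebraicClosure F)) Q with hR
  -- the matrix of R is P D P⁻¹
  have hRcoe : (R : Matrix (Fin m) (Fin m) K) =
      (P : Matrix (Fin m) (Fin m) K) * Matrix.diagonal dvec *
        ((P⁻¹ : (Matrix (Fin m) (Fin m) K)ˣ) : Matrix (Fin m) (Fin m) K) := hdiag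
  -- choose indices a b with dvec a = lam i, dvec b = lam j
  obtain ⟨a, ha⟩ : (lam i : K) ∈ Set.range dvec := by
    rw [← hrange]; exact ⟨i, rfl⟩
  obtain ⟨b, hb⟩ : (lam j : K) ∈ Set.range dvec := by
    rw [← hrange]; exact ⟨j, rfl⟩
  have hlij : (lam i : K) ≠ (lam j : K) := fun h => hij (hlam (Units.ext h))
  have hab : a ≠ b := by
    intro h; apply hlij; rw [← ha, ← hb, h]
  -- the vector w
  set w : Fin m → K := Pi.single a 1 + Pi.single b 1 with hw
  have hwa : w a = 1 := by simp [hw, Pi.single_apply, hab]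
  have hwb : w b = 1 := by simp [hw, Pi.single_apply, hab.symm]
  have hw0 : w ≠ 0 := fun h => by
    have := congrFun h a; rw [hwa] at this; simpa using this
  set v0 : Fin m → K := (P : Matrix (Fin m) (Fin m) K).mulVec w with hv0def
  have hv00 : v0 ≠ 0 := mulVec_unit_ne_zero P w hw0
  set v := Projectivization.mk K v0 hv00 with hv
  have hPinv : ((P⁻¹ : (Matrix (Fin m) (Fin m) (AlgebraicClosure F))ˣ) :
      Matrix (Fin m) (Fin m) (AlgebraicClosure F)) *
      (P : Matrix (Fin m) (Fin m) (AlgebraicClosure F)) = 1 := by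
    rw [← Units.val_mul, inv_mul_cancel, Units.val_one]
  have hPPinv : (P : Matrix (Fin m) (Fin m) (AlgebraicClosure F)) *
      ((P⁻¹ : (Matrix (Fin m) (Fin m) (AlgebraicClosure F))ˣ) :
        Matrix (Fin m) (Fin m) (AlgebraicClosure F)) = 1 := by
    rw [← Units.val_mul, mul_inv_cancel, Units.val_one]
  have hd1 : (Matrix.diagonal (1 : Fin m → AlgebraicClosure F)) = 1 := Matrix.diagonal_one
  -- key computation: R^n coe
  have hRn : ∀ n : ℕ, ((R ^ n : Matrix.GeneralLinearGroup (Fin m) K) :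
      Matrix (Fin m) (Fin m) K) =
      (P : Matrix (Fin m) (Fin m) K) * Matrix.diagonal (dvec ^ n) *
        ((P⁻¹ : (Matrix (Fin m) (Fin m) K)ˣ) : Matrix (Fin m) (Fin m) K) := by
    intro n
    induction n with
    | zero =>
        rw [pow_zero, Units.val_one, pow_zero, hd1, mul_one, hPPinv]
    | succ n ih =>
        rw [pow_succ, Units.val_mul, ih, hRcoe]
        simp only [mul_assoc]
        rw [← mul_assoc ((P⁻¹ : (Matrix (Fin m) (Fin m) (AlgebraicClosure F))ˣ) :
          Matrix (Fin m) (Fin m) (AlgebraicClosure F)) (P : Matrix (Fin m) (Fin m)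
          (AlgebraicClosure F)), hPinv, one_mul,
          ← mul_assoc (Matrix.diagonal (dvec ^ n)), Matrix.diagonal_mul_diagonal]
        congr 2
        ext x
        simp [pow_succ, Matrix.diagonal_apply]
  have hPinj : Function.Injective
      ((P : Matrix (Fin m) (Fin m) (AlgebraicClosure F)).mulVec) := by
    intro x y hxy
    have h2 := congrArg (Matrix.mulVec ((P⁻¹ : (Matrix (Fin m) (Fin m)
      (AlgebraicClosure F))ˣ) : Matrix (Fin m) (Fin m) (AlgebraicClosure F))) hxy
    simpa only [Matrix.mulVec_mulVec, hPinv, Matrix.one_mulVec] using h2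
  have hdw : ∀ n : ℕ, (Matrix.diagonal (dvec ^ n)).mulVec w = (dvec ^ n) * w := by
    intro n; ext x; rw [Matrix.mulVec_diagonal]; rfl
  -- mulVec computation
  have hcalc : ∀ n : ℕ, ((R ^ n : Matrix.GeneralLinearGroup (Fin m) (AlgebraicClosure F)) :
      Matrix (Fin m) (Fin m) (AlgebraicClosure F)).mulVec v0 =
      (P : Matrix (Fin m) (Fin m) (AlgebraicClosure F)).mulVec ((dvec ^ n) * w) := by
    intro n
    rw [hRn n, hv0def, Matrix.mulVec_mulVec, mul_assoc, mul_assoc, ← Units.val_mul,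
      inv_mul_cancel, Units.val_one, mul_one, ← Matrix.mulVec_mulVec, hdw]
  have hiter : ∀ n : ℕ, ((tauQ R)^[n] v = v ↔ (lam i / lam j) ^ n = 1) := by
    intro n
    rw [hv, tauQ_iter_mk, Projectivization.mk_eq_mk_iff']
    constructor
    · rintro ⟨c, hc⟩
      rw [hcalc n, hv0def] at hc
      have hcw : c • w = (dvec ^ n) * w := by
        apply hPinj
        rw [Matrix.mulVec_smul]
        exact hc
      have hi' := congrFun hcw a
      have hj' := congrFun hcw b
      simp only [Pi.mul_apply, Pi.pow_apply, Pi.smul_apply, smul_eq_mul, hwa, hwb,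
        mul_one] at hi' hj'
      rw [ha] at hi'; rw [hb] at hj'
      have hpow : (lam i : AlgebraicClosure F) ^ n = (lam j : AlgebraicClosure F) ^ n := by
        rw [← hi', ← hj']
      rw [div_pow, div_eq_one]
      exact Units.ext (by push_cast; exact hpow)
    · intro hn
      have h' : lam i ^ n = lam j ^ n := by rwa [div_pow, div_eq_one] at hn
      have hij' : (lam i : AlgebraicClosure F) ^ n = (lam j : AlgebraicClosure F) ^ n := by
        have h2 := congrArg Units.val h'
        push_cast at h2
        exact h2
      refine ⟨(lam j : AlgebraicClosure F) ^ n, ?_⟩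
      rw [hcalc n, hv0def, ← Matrix.mulVec_smul]
      apply congrArg
      funext x
      simp only [Pi.smul_apply, smul_eq_mul, Pi.mul_apply, Pi.pow_apply]
      rcases eq_or_ne x a with rfl | hxa
      · rw [ha, hij']
      · rcases eq_or_ne x b with rfl | hxb
        · rw [hb]
        · have hwx : w x = 0 := by simp [hw, Pi.single_apply, hxa.symm, hxb.symm]
          rw [hwx, mul_zero, mul_zero]
  -- τ v ≠ v
  have hτ : tauQ R v ≠ v := by
    intro h
    have h1 : (tauQ R)^[1] v = v := by simpa using h
    rw [hiter 1] at h1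
    rw [pow_one, div_eq_one] at h1
    exact hij (hlam h1)
  have hleast := hper v hτ
  have hleast' : IsLeast {n : ℕ | 0 < n ∧ (lam i / lam j) ^ n = 1} ℓ := by
    obtain ⟨⟨hℓpos, hℓeq⟩, hlb⟩ := hleast
    refine ⟨⟨hℓpos, (hiter ℓ).mp hℓeq⟩, ?_⟩
    intro n hn
    exact hlb ⟨hn.1, (hiter n).mpr hn.2⟩
  obtain ⟨⟨hℓpos, hℓeq⟩, hlb⟩ := hleast'
  have hfin : IsOfFinOrder (lam i / lam j) :=
    isOfFinOrder_iff_pow_eq_one.mpr ⟨ℓ, hℓpos, hℓeq⟩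
  have h1 : orderOf (lam i / lam j) ≤ ℓ := orderOf_le_of_pow_eq_one hℓpos hℓeq
  have h2 : ℓ ≤ orderOf (lam i / lam j) :=
    hlb ⟨hfin.orderOf_pos, pow_orderOf_eq_one _⟩
  omega
end
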